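/- Let H be a real Hilbert space, V a closed subspace with finite-dimensional orthogonal complement V⊥, and A : H → H a bounded self-adjoint injective linear operator. Let E : V → V be a bounded self-adjoint operator with ⟨E v, v⟩ ≤ −δ‖v‖² for all v ∈ V and some δ > 0. Define A11 := P_{V⊥} ∘ A restricted to V⊥ (an operator V⊥ → V⊥), A12 := P_{V⊥} ∘ A restricted to V (an operator V → V⊥), and D* := A12 ∘ (−E)^{−1} ∘ A12* : V⊥ → V⊥. Then D* is self-adjoint and positive semidefinite, and for every nonzero r ∈ ker A11 one has ⟨r, D* r⟩ > 0. -/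

import Mathlib

set_option synthInstance.maxHeartbeats 1000000
set_option maxHeartbeats 2000000

/-- **Stable viscosity property of the Chapman–Enskog diffusion operator.**
With `A` bounded self-adjoint injective, `E` self-adjoint negative definite on `V`,
`A11 = P_{V⊥} A |_{V⊥}`, `A12 = P_{V⊥} A |_V` and `D* = A12 (−E)⁻¹ A12*`, the operator
`D*` is self-adjoint positive semidefinite, and `⟨r, D* r⟩ > 0` for `0 ≠ r ∈ ker A11`. -/
theorem stable_viscosity
    {H : Type*} [NormedAddCommGroup H] [InnerProductSpace ℝ H] [CompleteSpace H]
    (V : Submodule ℝ H) (hVclosed : IsClosed (V : Set H)) [CompleteSpace ↥V]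
    [FiniteDimensional ℝ ↥Vᗮ]
    (A : H →L[ℝ] H) (hA : IsSelfAdjoint A) (hAinj : Function.Injective A)
    (E : ↥V →L[ℝ] ↥V) (hE : IsSelfAdjoint E)
    (δ : ℝ) (hδ : 0 < δ) (hEneg : ∀ v : ↥V, inner ℝ (E v) v ≤ -δ * ‖v‖ ^ 2)
    (Einv : ↥V →L[ℝ] ↥V) (hEinv₁ : (-E).comp Einv = 1) (hEinv₂ : Einv.comp (-E) = 1)
    (A11 : ↥Vᗮ →L[ℝ] ↥Vᗮ)
    (hA11 : A11 = (Vᗮ.orthogonalProjectionOnto).comp (A.comp Vᗮ.subtypeL))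
    (A12 : ↥V →L[ℝ] ↥Vᗮ)
    (hA12 : A12 = (Vᗮ.orthogonalProjectionOnto).comp (A.comp V.subtypeL))
    (Dstar : ↥Vᗮ →L[ℝ] ↥Vᗮ)
    (hDstar : Dstar = A12.comp (Einv.comp (ContinuousLinearMap.adjoint A12))) :
    IsSelfAdjoint Dstar ∧ (∀ r : ↥Vᗮ, (0 : ℝ) ≤ inner ℝ r (Dstar r)) ∧
      ∀ r : ↥Vᗮ, r ∈ LinearMap.ker (A11 : ↥Vᗮ →ₗ[ℝ] ↥Vᗮ) → r ≠ 0 → (0 : ℝ) < inner ℝ r (Dstar r) := by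
  have hnE : ContinuousLinearMap.adjoint (-E) = -E := by
    rw [map_neg, hE.adjoint_eq]
  -- Einv is self-adjoint
  have hEinvSA : ContinuousLinearMap.adjoint Einv = Einv := by
    have h1 : (-E).comp (ContinuousLinearMap.adjoint Einv) = 1 := by
      have := congrArg ContinuousLinearMap.adjoint hEinv₂
      rw [ContinuousLinearMap.adjoint_comp, hnE] at this
      simpa [ContinuousLinearMap.one_def, ContinuousLinearMap.adjoint_id] using this
    calc ContinuousLinearMap.adjoint Einv
        = (Einv.comp (-E)).comp (ContinuousLinearMap.adjoint Einv) := by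
          rw [hEinv₂, ContinuousLinearMap.one_def, ContinuousLinearMap.id_comp]
      _ = Einv.comp ((-E).comp (ContinuousLinearMap.adjoint Einv)) := by
          rw [ContinuousLinearMap.comp_assoc]
      _ = Einv := by rw [h1, ContinuousLinearMap.one_def, ContinuousLinearMap.comp_id]
  -- Einv is positive semidefinite, and positive on nonzero vectors
  have hEinvPos : ∀ w : ↥V, δ * ‖Einv w‖ ^ 2 ≤ inner ℝ w (Einv w) := by
    intro w
    have hw : (-E) (Einv w) = w := by
      have := congrArg (fun T : ↥V →L[ℝ] ↥V => T w) hEinv₁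
      simpa using this
    have := hEneg (Einv w)
    calc δ * ‖Einv w‖ ^ 2 ≤ -(inner ℝ (E (Einv w)) (Einv w)) := by linarith
      _ = inner ℝ ((-E) (Einv w)) (Einv w) := by
          simp [inner_neg_left]
      _ = inner ℝ w (Einv w) := by rw [hw]
  -- key computation of adjoint of A12
  have hA12adj : ContinuousLinearMap.adjoint A12
      = (V.orthogonalProjectionOnto).comp (A.comp Vᗮ.subtypeL) := by
    rw [hA12, ContinuousLinearMap.adjoint_comp, ContinuousLinearMap.adjoint_comp,
      Submodule.adjoint_subtypeL, Submodule.adjoint_orthogonalProjectionOnto, hA.adjoint_eq]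
    rw [ContinuousLinearMap.comp_assoc]
  refine ⟨?_, ?_, ?_⟩
  · -- self-adjoint
    rw [ContinuousLinearMap.isSelfAdjoint_iff', hDstar,
      ContinuousLinearMap.adjoint_comp, ContinuousLinearMap.adjoint_comp,
      ContinuousLinearMap.adjoint_adjoint, hEinvSA, ← ContinuousLinearMap.comp_assoc]
  · intro r
    have key : (inner ℝ r (Dstar r) : ℝ)
        = inner ℝ (ContinuousLinearMap.adjoint A12 r) (Einv (ContinuousLinearMap.adjoint A12 r)) := by
      rw [hDstar]
      simp only [ContinuousLinearMap.comp_apply]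
      exact (ContinuousLinearMap.adjoint_inner_left A12 _ _).symm
    rw [key]
    exact le_trans (by positivity) (hEinvPos _)
  · intro r hr hr0
    have key : (inner ℝ r (Dstar r) : ℝ)
        = inner ℝ (ContinuousLinearMap.adjoint A12 r) (Einv (ContinuousLinearMap.adjoint A12 r)) := by
      rw [hDstar]
      simp only [ContinuousLinearMap.comp_apply]
      exact (ContinuousLinearMap.adjoint_inner_left A12 _ _).symm
    rw [key]
    set w := ContinuousLinearMap.adjoint A12 r with hw
    have hwne : w ≠ 0 := by
      intro hw0
      -- from A11 r = 0 and A12* r = 0 deduce A r = 0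
      have h1 : (Vᗮ.orthogonalProjectionOnto) (A (r : H)) = 0 := by
        have := hr
        rw [LinearMap.mem_ker, hA11] at this
        simpa using this
      have h2 : (V.orthogonalProjectionOnto) (A (r : H)) = 0 := by
        have := hw0
        rw [hw, hA12adj] at this
        simpa using this
      have hAr : A (r : H) = 0 := by
        have : ((V.orthogonalProjectionOnto (A (r : H)) : H) + (Vᗮ.orthogonalProjectionOnto (A (r : H)) : H)) = A (r : H) :=
          V.starProjection_add_starProjection_orthogonal _
        rw [h1, h2] at this
        simpa using this.symm
      have : (r : H) = 0 := hAinj (by simpa using hAr)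
      exact hr0 (by exact_mod_cast Subtype.ext this)
    have hEw : Einv w ≠ 0 := by
      intro h
      have : (-E) (Einv w) = w := by
        have := congrArg (fun T : ↥V →L[ℝ] ↥V => T w) hEinv₁
        simpa using this
      rw [h] at this
      exact hwne (by simpa using this.symm)
    have := hEinvPos w
    have hnorm : 0 < ‖Einv w‖ := norm_pos_iff.mpr hEw
    have hpos : 0 < δ * ‖Einv w‖ ^ 2 := by positivity
    linarith
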